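/- Equivalence of the environment-based and substitution-based semantics: for any program P, (i) if P:[] ⇓ v in the environment-based semantics then P ⇓ F(v) in the substitution-based call-by-value semantics, and (ii) if P ⇓ w in the substitution-based semantics then there exists a value v' such that P:[] ⇓ v' in the environment-based semantics and F(v') = w. -/
import Mathlib


/- Untyped λ-expressions. -/
inductive Exp : Type
  | var : String → Exp
  | app : Exp → Exp → Exp
  | lam : String → Exp → Exp
deriving DecidableEq

namespace Exp

/-- Free variables. -/
def fv : Exp → Finset String
  | var x => {x}
  | app e1 e2 => fv e1 ∪ fv e2
  | lam x e => fv e \ {x}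

/-- The set of subexpressions of a λ-expression. -/
def subexp : Exp → Set Exp
  | var x => {var x}
  | app e1 e2 => insert (app e1 e2) (subexp e1 ∪ subexp e2)
  | lam x e => insert (lam x e) (subexp e)

end Exp

/- Values (closures), environments and states of the environment-based
semantics.  An environment is a (partial) map from variable names to values;
a state `e:ρ` pairs an expression with an environment. -/
inductive Val : Type
  | clos : String → Exp → (String → Option Val) → Val

abbrev Env := String → Option Val
abbrev State := Exp × Env

/-- A value `λx.e:ρ` viewed as a state. -/
def Val.toState : Val → State
  | .clos x e ρ => (Exp.lam x e, ρ)

/-- The λ-expression component of a value. -/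
def Val.toExp : Val → Exp
  | .clos x e _ => Exp.lam x e

def Env.update (ρ : Env) (x : String) (v : Val) : Env :=
  fun y => if y = x then some v else ρ y

def Env.empty : Env := fun _ => none

namespace Exp
/-- Substitution e[v/x].  (For closed `v`, as in CBV evaluation of programs,
this is capture-avoiding.) -/
def subst (v : Exp) (x : String) : Exp → Exp
  | var y => if y = x then v else var y
  | app e1 e2 => app (subst v x e1) (subst v x e2)
  | lam y e => if y = x then lam y e else lam y (subst v x e)
end Exp

/-- Call-by-value evaluation `e ⇓ v` (standard, substitution-based semantics). -/
inductive EvalS : Exp → Exp → Prop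
  | value (x : String) (e : Exp) : EvalS (Exp.lam x e) (Exp.lam x e)
  | apply {e1 e2 : Exp} {x : String} {e0 v2 v : Exp} :
      EvalS e1 (Exp.lam x e0) → EvalS e2 v2 → EvalS (Exp.subst v2 x e0) v →
      EvalS (Exp.app e1 e2) v

/- Environment-based evaluation `s ⇓ v`, with the three-premise (Apply) rule. -/
inductive EvalE : State → Val → Prop
  | value (x : String) (e : Exp) (ρ : Env) :
      EvalE (Exp.lam x e, ρ) (Val.clos x e ρ)
  | var {ρ : Env} {x : String} {v : Val} :
      ρ x = some v → EvalE (Exp.var x, ρ) v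
  | apply {e1 e2 : Exp} {ρ ρ0 : Env} {x : String} {e0 : Exp} {v2 v : Val} :
      EvalE (e1, ρ) (Val.clos x e0 ρ0) → EvalE (e2, ρ) v2 →
      EvalE (e0, Env.update ρ0 x v2) v →
      EvalE (Exp.app e1 e2, ρ) v

def Env.remove (ρ : Env) (x : String) : Env :=
  fun y => if y = x then none else ρ y

/-- The flattening function `F : State → Exp`,
`F(e:ρ) = e[F(ρ(x₁))/x₁, …, F(ρ(x_k))/x_k]` for `{x₁,…,x_k} = fv(e)`,
presented as a (functional) relation: `Flat e ρ t` means `F(e:ρ) = t`. -/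
inductive Flat : Exp → Env → Exp → Prop
  | varB {ρ : Env} {x y : String} {e : Exp} {ρ' : String → Option Val} {t : Exp} :
      ρ x = some (Val.clos y e ρ') → Flat (Exp.lam y e) ρ' t → Flat (Exp.var x) ρ t
  | varF {ρ : Env} {x : String} :
      ρ x = none → Flat (Exp.var x) ρ (Exp.var x)
  | app {ρ : Env} {e1 e2 t1 t2 : Exp} :
      Flat e1 ρ t1 → Flat e2 ρ t2 → Flat (Exp.app e1 e2) ρ (Exp.app t1 t2)
  | lam {ρ : Env} {x : String} {e t : Exp} :
      Flat e (Env.remove ρ x) t → Flat (Exp.lam x e) ρ (Exp.lam x t)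

/-! ### Auxiliary development -/

/-- Well-formed values: every free variable of the closure body is bound in its
environment to a well-formed value. -/
inductive WFV : Val → Prop
  | clos {x : String} {e : Exp} {ρ : Env} :
      (∀ y ∈ (Exp.lam x e).fv, (ρ y).isSome) →
      (∀ y ∈ (Exp.lam x e).fv, ∀ u, ρ y = some u → WFV u) →
      WFV (.clos x e ρ)

/-- Well-formed environment on a set of variables. -/
def WFEnv (ρ : Env) (S : Finset String) : Prop :=
  ∀ y ∈ S, ∃ u, ρ y = some u ∧ WFV u

lemma env_remove_update (ρ : Env) (x : String) (v : Val) :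
    Env.remove (Env.update ρ x v) x = Env.remove ρ x := by
  funext z; simp only [Env.remove, Env.update]; split <;> rfl

lemma env_remove_remove_self (ρ : Env) (x : String) :
    Env.remove (Env.remove ρ x) x = Env.remove ρ x := by
  funext z; simp only [Env.remove]; split <;> simp_all

lemma env_remove_remove (ρ : Env) (x y : String) :
    Env.remove (Env.remove ρ x) y = Env.remove (Env.remove ρ y) x := by
  funext z; simp only [Env.remove]; split <;> split <;> simp_all

lemma env_remove_update_ne (ρ : Env) {x y : String} (h : y ≠ x) (v : Val) :
    Env.remove (Env.update ρ x v) y = Env.update (Env.remove ρ y) x v := by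
  funext z; simp only [Env.remove, Env.update]
  by_cases hzy : z = y <;> by_cases hzx : z = x <;> simp_all

lemma subst_not_free {x : String} {t : Exp} (h : x ∉ t.fv) (w : Exp) :
    Exp.subst w x t = t := by
  induction t with
  | var y =>
      simp only [Exp.fv, Finset.mem_singleton] at h
      simp [Exp.subst, Ne.symm h]
  | app t1 t2 ih1 ih2 =>
      simp only [Exp.fv, Finset.mem_union, not_or] at h
      simp [Exp.subst, ih1 h.1, ih2 h.2]
  | lam y t ih =>
      by_cases hyx : y = x
      · simp [Exp.subst, hyx]
      · simp only [Exp.fv, Finset.mem_sdiff, Finset.mem_singleton, not_and, not_not] at h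
        have hx : x ∉ t.fv := fun hx => hyx (h hx).symm
        simp [Exp.subst, hyx, ih hx]

/-- Flattening under a well-formed environment only leaves the variables that
the environment does not bind. -/
lemma flat_fv {e : Exp} {ρ : Env} {t : Exp} (hf : Flat e ρ t)
    (hwf : ∀ y ∈ e.fv, ∀ u, ρ y = some u → WFV u) :
    ∀ z ∈ t.fv, z ∈ e.fv ∧ ρ z = none := by
  induction hf with
  | @varB ρ x y e ρ' t h hin ih =>
      intro z hz
      have hwv : WFV (Val.clos y e ρ') := hwf x (by simp [Exp.fv]) _ h
      cases hwv with
      | clos hs hw =>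
          have := ih hw z hz
          have h2 := hs z this.1
          rw [this.2] at h2; simp at h2
  | varF h =>
      intro z hz
      simp only [Exp.fv, Finset.mem_singleton] at hz
      subst hz; exact ⟨by simp [Exp.fv], h⟩
  | app h1 h2 ih1 ih2 =>
      intro z hz
      simp only [Exp.fv, Finset.mem_union] at hz
      rcases hz with hz | hz
      · have := ih1 (fun y hy => hwf y (by simp [Exp.fv, hy])) z hz
        exact ⟨by simp [Exp.fv, this.1], this.2⟩
      · have := ih2 (fun y hy => hwf y (by simp [Exp.fv, hy])) z hz
        exact ⟨by simp [Exp.fv, this.1], this.2⟩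
  | @lam ρ x e t h ih =>
      intro z hz
      simp only [Exp.fv, Finset.mem_sdiff, Finset.mem_singleton] at hz
      have hwf' : ∀ y ∈ e.fv, ∀ u, Env.remove ρ x y = some u → WFV u := by
        intro y hy u hu
        simp only [Env.remove] at hu
        by_cases hyx : y = x
        · simp [hyx] at hu
        · simp only [hyx, if_false] at hu
          exact hwf y (by simp [Exp.fv, hy, hyx]) u hu
      have := ih hwf' z hz.1
      have hne : z ≠ x := hz.2
      refine ⟨by simp [Exp.fv, this.1, hne], ?_⟩
      have h2 := this.2
      simpa [Env.remove, hne] using h2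

/-- Flattenings of well-formed values are closed. -/
lemma flat_val_closed {v : Val} {w : Exp} (hv : WFV v)
    (hf : Flat v.toState.1 v.toState.2 w) : w.fv = ∅ := by
  cases hv with
  | @clos x e ρ hs hw =>
      simp only [Val.toState] at hf
      have := flat_fv hf hw
      ext z
      simp only [Finset.notMem_empty, iff_false]
      intro hz
      have h1 := this z hz
      have h2 := hs z h1.1
      rw [h1.2] at h2; simp at h2

/-- Substitution lemma: flattening commutes with environment update. -/
lemma flat_subst (x : String) (v : Val) (w : Exp)
    (hvw : Flat v.toState.1 v.toState.2 w) :
    ∀ e ρ t, Flat e (Env.remove ρ x) t →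
      (∀ y ∈ e.fv, ∀ u, Env.remove ρ x y = some u → WFV u) →
      Flat e (Env.update ρ x v) (Exp.subst w x t) := by
  intro e
  induction e with
  | var y =>
      intro ρ t hf hwf
      cases hf with
      | @varB _ _ a b ρ' _ h hin =>
          have hyx : y ≠ x := by
            intro h'; rw [h'] at h; simp [Env.remove] at h
          have hρ : ρ y = some (Val.clos a b ρ') := by
            simpa [Env.remove, hyx] using h
          have hwv : WFV (Val.clos a b ρ') := hwf y (by simp [Exp.fv]) _ h
          have hclosed : t.fv = ∅ := flat_val_closed hwv (by simpa [Val.toState] using hin)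
          have hsub : Exp.subst w x t = t := subst_not_free (by simp [hclosed]) w
          rw [hsub]
          exact Flat.varB (by simp [Env.update, hyx, hρ]) hin
      | varF h =>
          by_cases hyx : y = x
          · cases v with
            | clos a b ρv =>
                rw [hyx]
                simp only [Exp.subst, if_pos rfl]
                exact Flat.varB (x := x) (y := a) (e := b) (ρ' := ρv)
                  (by simp [Env.update]) (by simpa [Val.toState] using hvw)
          · have hρ : ρ y = none := by simpa [Env.remove, hyx] using h
            simp only [Exp.subst, if_neg hyx]
            exact Flat.varF (by simp [Env.update, hyx, hρ])
  | app e1 e2 ih1 ih2 =>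
      intro ρ t hf hwf
      cases hf with
      | app h1 h2 =>
          exact Flat.app
            (ih1 _ _ h1 (fun y hy => hwf y (by simp [Exp.fv, hy])))
            (ih2 _ _ h2 (fun y hy => hwf y (by simp [Exp.fv, hy])))
  | lam y b ih =>
      intro ρ t hf hwf
      cases hf with
      | @lam _ _ _ t' h =>
          by_cases hyx : y = x
          · subst hyx
            simp only [Exp.subst, if_pos rfl]
            apply Flat.lam
            rw [env_remove_update]
            rw [env_remove_remove_self] at h
            exact h
          · simp only [Exp.subst, if_neg hyx]
            apply Flat.lam
            rw [env_remove_update_ne ρ hyx v]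
            apply ih
            · rw [← env_remove_remove]; exact h
            · intro z hz u hu
              by_cases hzy : z = y
              · subst hzy; simp [Env.remove] at hu
              · have : Env.remove ρ x z = some u := by
                  by_cases hzx : z = x
                  · simp [hzx, Env.remove] at hu
                  · simpa [Env.remove, hzx, hzy] using hu
                exact hwf z (by simp [Exp.fv, hz, hzy]) u this

/-- Soundness: environment-based evaluation implies substitution-based
evaluation of the flattened state. -/
lemma evalE_sound : ∀ {s : State} {v : Val}, EvalE s v →
    ∀ t, Flat s.1 s.2 t → WFEnv s.2 s.1.fv →
      WFV v ∧ ∃ w, Flat v.toState.1 v.toState.2 w ∧ EvalS t w := by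
  intro s v h
  induction h with
  | value x e ρ =>
      intro t hf hwf
      dsimp only at hf hwf
      refine ⟨WFV.clos (fun y hy => ?_) (fun y hy u hu => ?_), t, by simpa [Val.toState] using hf, ?_⟩
      · obtain ⟨u, hu, _⟩ := hwf y hy; simp [hu]
      · obtain ⟨u', hu', hwu'⟩ := hwf y hy; rw [hu'] at hu; cases hu; exact hwu'
      · cases hf with
        | lam h => exact EvalS.value _ _
  | @var ρ x v h =>
      intro t hf hwf
      dsimp only at hf hwf
      obtain ⟨u, hu, hwu⟩ := hwf x (by simp [Exp.fv])
      rw [h] at hu; cases hu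
      cases hf with
      | @varB _ _ a b ρ' _ h' hin =>
          rw [h] at h'; cases h'
          refine ⟨hwu, t, by simpa [Val.toState] using hin, ?_⟩
          cases hin with
          | lam _ => exact EvalS.value _ _
      | varF h' => rw [h] at h'; cases h'
  | @apply e1 e2 ρ ρ0 x e0 v2 v he1 he2 he0 ih1 ih2 ih3 =>
      intro t hf hwf
      dsimp only at hf hwf
      cases hf with
      | @app _ _ _ t1 t2 h1 h2 =>
          have hwf1 : WFEnv ρ e1.fv := fun y hy => hwf y (by simp [Exp.fv, hy])
          have hwf2 : WFEnv ρ e2.fv := fun y hy => hwf y (by simp [Exp.fv, hy])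
          obtain ⟨hwv1, w1, hfw1, hev1⟩ := ih1 t1 h1 hwf1
          obtain ⟨hwv2, w2, hfw2, hev2⟩ := ih2 t2 h2 hwf2
          simp only [Val.toState] at hfw1
          cases hfw1 with
          | @lam _ _ _ t0 hbody =>
              have hw2c : w2.fv = ∅ := flat_val_closed hwv2 hfw2
              cases hwv1 with
              | clos hs hwc =>
                  have hsub : Flat e0 (Env.update ρ0 x v2) (Exp.subst w2 x t0) := by
                    apply flat_subst x v2 w2 hfw2 e0 ρ0 t0 hbody
                    intro y hy u hu
                    have hyx : y ≠ x := by
                      intro h'; rw [h'] at hu; simp [Env.remove] at hu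
                    have : ρ0 y = some u := by simpa [Env.remove, hyx] using hu
                    exact hwc y (by simp [Exp.fv, hy, hyx]) u this
                  have hwfup : WFEnv (Env.update ρ0 x v2) e0.fv := by
                    intro y hy
                    by_cases hyx : y = x
                    · exact ⟨v2, by simp [Env.update, hyx], hwv2⟩
                    · have hy' : y ∈ (Exp.lam x e0).fv := by simp [Exp.fv, hy, hyx]
                      obtain ⟨u, hu⟩ := Option.isSome_iff_exists.mp (hs y hy')
                      exact ⟨u, by simp [Env.update, hyx, hu], hwc y hy' u hu⟩
                  obtain ⟨hwv, w, hfw, hev⟩ := ih3 (Exp.subst w2 x t0) hsub hwfup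
                  exact ⟨hwv, w, hfw, EvalS.apply hev1 hev2 hev⟩

/-- Completeness: substitution-based evaluation can be simulated by the
environment-based semantics on any state flattening to the source term. -/
lemma evalS_complete : ∀ {s w : Exp}, EvalS s w →
    ∀ e ρ, Flat e ρ s → WFEnv ρ e.fv →
      ∃ v : Val, EvalE (e, ρ) v ∧ WFV v ∧ Flat v.toState.1 v.toState.2 w := by
  intro s w h
  induction h with
  | value x b =>
      intro e ρ hf hwf
      cases hf with
      | @varB _ y a b' ρ' _ h hin =>
          obtain ⟨u, hu, hwu⟩ := hwf y (by simp [Exp.fv])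
          rw [h] at hu; cases hu
          exact ⟨_, EvalE.var h, hwu, by simpa [Val.toState] using hin⟩
      | @lam _ _ e' _ h =>
          refine ⟨Val.clos x e' ρ, EvalE.value _ _ _, ?_, ?_⟩
          · refine WFV.clos (fun y hy => ?_) (fun y hy u hu => ?_)
            · obtain ⟨u, hu, _⟩ := hwf y hy; simp [hu]
            · obtain ⟨u', hu', hwu'⟩ := hwf y hy; rw [hu'] at hu; cases hu; exact hwu'
          · simpa [Val.toState] using Flat.lam h
  | @apply s1 s2 x e0 v2 w' he1 he2 he3 ih1 ih2 ih3 =>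
      intro e ρ hf hwf
      cases hf with
      | varB h hin => cases hin
      | @app _ e1 e2 _ _ h1 h2 =>
          have hwf1 : WFEnv ρ e1.fv := fun y hy => hwf y (by simp [Exp.fv, hy])
          have hwf2 : WFEnv ρ e2.fv := fun y hy => hwf y (by simp [Exp.fv, hy])
          obtain ⟨v1, hev1, hwv1, hfw1⟩ := ih1 e1 ρ h1 hwf1
          obtain ⟨v2', hev2, hwv2, hfw2⟩ := ih2 e2 ρ h2 hwf2
          cases v1 with
          | clos x1 b1 ρ1 =>
              simp only [Val.toState] at hfw1
              cases hfw1 with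
              | @lam _ _ _ t0 hbody =>
                  have hw2c : v2.fv = ∅ := flat_val_closed hwv2 hfw2
                  cases hwv1 with
                  | clos hs hwc =>
                      have hsub : Flat b1 (Env.update ρ1 x v2') (Exp.subst v2 x e0) := by
                        apply flat_subst x v2' v2 hfw2 b1 ρ1 e0 hbody
                        intro y hy u hu
                        have hyx : y ≠ x := by
                          intro h'; rw [h'] at hu; simp [Env.remove] at hu
                        have : ρ1 y = some u := by simpa [Env.remove, hyx] using hu
                        exact hwc y (by simp [Exp.fv, hy, hyx]) u this
                      have hwfup : WFEnv (Env.update ρ1 x v2') b1.fv := by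
                        intro y hy
                        by_cases hyx : y = x
                        · exact ⟨v2', by simp [Env.update, hyx], hwv2⟩
                        · have hy' : y ∈ (Exp.lam x b1).fv := by simp [Exp.fv, hy, hyx]
                          obtain ⟨u, hu⟩ := Option.isSome_iff_exists.mp (hs y hy')
                          exact ⟨u, by simp [Env.update, hyx, hu], hwc y hy' u hu⟩
                      obtain ⟨v', hev3, hwv', hfw'⟩ := ih3 b1 (Env.update ρ1 x v2') hsub hwfup
                      exact ⟨v', EvalE.apply hev1 hev2 hev3, hwv', hfw'⟩

/-- A closed-on-`ρ` expression flattens to itself. -/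
lemma flat_id : ∀ (e : Exp) (ρ : Env), (∀ y ∈ e.fv, ρ y = none) → Flat e ρ e := by
  intro e
  induction e with
  | var x => intro ρ h; exact Flat.varF (h x (by simp [Exp.fv]))
  | app e1 e2 ih1 ih2 =>
      intro ρ h
      exact Flat.app (ih1 ρ (fun y hy => h y (by simp [Exp.fv, hy])))
        (ih2 ρ (fun y hy => h y (by simp [Exp.fv, hy])))
  | lam x e ih =>
      intro ρ h
      apply Flat.lam
      apply ih
      intro y hy
      by_cases hyx : y = x
      · simp [Env.remove, hyx]
      · simp only [Env.remove, hyx, if_false]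
        exact h y (by simp [Exp.fv, hy, hyx])

/-- Equivalence of the environment-based and substitution-based semantics:
(i) `P:[] ⇓ v` implies `P ⇓ F(v)`, and (ii) `P ⇓ w` implies `P:[] ⇓ v'` for
some `v'` with `F(v') = w`. -/
theorem env_substitution_semantics_equivalent (P : Exp) (hP : P.fv = ∅) :
    (∀ v : Val, EvalE (P, Env.empty) v →
      ∃ w, Flat v.toState.1 v.toState.2 w ∧ EvalS P w) ∧
    (∀ w : Exp, EvalS P w →
      ∃ v : Val, EvalE (P, Env.empty) v ∧ Flat v.toState.1 v.toState.2 w) := by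
  have hflat : Flat P Env.empty P := flat_id P Env.empty (fun y _ => rfl)
  have hwf : WFEnv Env.empty P.fv := by intro y hy; rw [hP] at hy; simp at hy
  constructor
  · intro v hv
    obtain ⟨_, w, hfw, hev⟩ := evalE_sound hv P hflat hwf
    exact ⟨w, hfw, hev⟩
  · intro w hw
    obtain ⟨v, hev, _, hfw⟩ := evalS_complete hw P Env.empty hflat hwf
    exact ⟨v, hev, hfw⟩
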